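/- arXiv:1105.3991 — 2 statements merged into one kernel-verified Lean document; each statement's English description precedes it below -/
import Mathlib

section
/- Let (R,m,k) be a local ring with e = edim R and d = depth R, fix a Cohen presentation R̂ ≅ P/I, and set l = dim_k(I/pI) - 1. Assume there exist polynomials f(t), g(t) ∈ ℤ[t] such that g(t)·P^R_k(t) = (1+t)^{e-1} and g(t)·I^R(t) = t^d·f(t) as formal power series. Suppose moreover that s ≥ 0 is an integer for which (1-t²)^{l+1}·P^R_k(t) = (1+t)^e·(1+t³)^s·(1 + Σ_{j≥3} c_j t^j) with all c_j ≥ 0 (in the paper this holds for every s with 0 ≤ s ≤ m - p, by the structure theorem for Poincaré series of local rings). Let Σ_{i≥0} b_i t^i ∈ ℤ[[t]] be the power series with (1-t²)²·(Σ b_i t^i) = f(t)·(1+t³)^s. Then μ^d_R = b_0, μ^{d+1}_R - μ^d_R = b_1, and μ^{d+2}_R - μ^{d+1}_R = b_2 + (l-2)b_0. Moreover, if l ≥ 2 and b_i ≥ 0 for all i ≥ 1, then μ^{d+i}_R - μ^{d+i-1}_R ≥ b_i + (l-2)b_{i-2} ≥ b_i for all i ≥ 2. -/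
open CategoryTheory Opposite IsLocalRing PowerSeries

noncomputable section

/-- The length of a module, as the Krull dimension of its submodule lattice,
truncated to a natural number.  For a module annihilated by the maximal ideal of
a local ring this equals its dimension as a vector space over the residue field. -/
def ldim (R M : Type) [Ring R] [AddCommGroup M] [Module R M] : ℕ :=
  ((Order.krullDim (Submodule R M)).unbotD 0).toNat

/-- `Ext_R^i(k, R)` for a local ring `R` with residue field `k`. -/
def extKR (R : Type) [CommRing R] [IsLocalRing R] (i : ℕ) : ModuleCat R :=
  ((Ext R (ModuleCat R) i).obj (op (ModuleCat.of R (ResidueField R)))).obj (ModuleCat.of R R)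

/-- The `i`-th Bass number `μ^i_R = dim_k Ext^i_R(k, R)`. -/
def bassNum (R : Type) [CommRing R] [IsLocalRing R] (i : ℕ) : ℕ :=
  ldim R (extKR R i)

/-- `depth R = inf { i | Ext^i_R(k,R) ≠ 0 }`. -/
def depthR (R : Type) [CommRing R] [IsLocalRing R] : ℕ :=
  sInf {i : ℕ | ¬ Subsingleton (extKR R i)}

/-- `Tor^R_i(k, k)`. -/
def torKK (R : Type) [CommRing R] [IsLocalRing R] (i : ℕ) : ModuleCat R :=
  ((Tor (ModuleCat R) i).obj (ModuleCat.of R (ResidueField R))).obj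
    (ModuleCat.of R (ResidueField R))

/-- The Poincaré series `P^R_k(t) = Σ_i dim_k Tor^R_i(k,k) tⁱ ∈ ℤ[[t]]`. -/
def poincareK (R : Type) [CommRing R] [IsLocalRing R] : PowerSeries ℤ :=
  PowerSeries.mk fun i => (ldim R (torKK R i) : ℤ)

/-- The Bass series `I^R(t) = Σ_i μ^i_R tⁱ ∈ ℤ[[t]]`. -/
def bassSeries (R : Type) [CommRing R] [IsLocalRing R] : PowerSeries ℤ :=
  PowerSeries.mk fun i => (bassNum R i : ℤ)

/-- The embedding dimension `edim R = dim_k m/m²`. -/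
def edim (R : Type) [CommRing R] [IsLocalRing R] : ℕ :=
  ldim R (maximalIdeal R).Cotangent

/-- A Noetherian local ring is regular when its Krull dimension equals its
embedding dimension. -/
def IsRegLocal (P : Type) [CommRing P] [IsLocalRing P] : Prop :=
  IsNoetherianRing P ∧ ringKrullDim P = (edim P : WithBot ℕ∞)

/-- The minimal number of generators of an ideal `I` of a local ring,
`dim_k I/pI`. -/
def minGensIdeal (P : Type) [CommRing P] [IsLocalRing P] (I : Ideal P) : ℕ :=
  ldim P (↥I ⧸ (maximalIdeal P • (⊤ : Submodule P ↥I)))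

/-- `I` is generated by a regular sequence. -/
def Ideal.IsGenRegularSeq {P : Type} [CommRing P] (I : Ideal P) : Prop :=
  ∃ rs : List P, RingTheory.Sequence.IsRegular P rs ∧ I = Ideal.span {x | x ∈ rs}

/-- A Cohen presentation `R̂ ≅ P/I` of a local ring `R`: `P` is a regular local ring
whose dimension is the embedding dimension of `R`, and `I ⊆ p²`. -/
structure CohenPresentation (R : Type) [CommRing R] [IsLocalRing R] : Type 1 where
  P : Type
  [commRing : CommRing P]
  [isLocal : IsLocalRing P]
  regular : IsRegLocal P
  I : Ideal P
  hI : I ≤ maximalIdeal P ^ 2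
  dimP : ringKrullDim P = (edim R : WithBot ℕ∞)
  iso : AdicCompletion (maximalIdeal R) R ≃+* P ⧸ I

attribute [instance] CohenPresentation.commRing CohenPresentation.isLocal

/-- `l + 1 = dim_k I/pI` for a Cohen presentation. -/
def CohenPresentation.minGens {R : Type} [CommRing R] [IsLocalRing R]
    (cp : CohenPresentation R) : ℕ :=
  minGensIdeal cp.P cp.I

/-- `R` is a complete intersection: in a Cohen presentation `R̂ ≅ P/I` the ideal `I`
is generated by a `P`-regular sequence. -/
def IsCompleteIntersection (R : Type) [CommRing R] [IsLocalRing R] : Prop :=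
  ∃ cp : CohenPresentation R, cp.I.IsGenRegularSeq

/-- `R` is Gorenstein: `R` is Cohen–Macaulay and `μ^{depth R}_R = 1`
(equivalently, `R` has finite injective dimension over itself). -/
def IsGorensteinLocal (R : Type) [CommRing R] [IsLocalRing R] : Prop :=
  ringKrullDim R = (depthR R : WithBot ℕ∞) ∧ bassNum R (depthR R) = 1



section Aux

lemma ldim_eq_zero (R M : Type) [Ring R] [AddCommGroup M] [Module R M]
    (h : Subsingleton M) : ldim R M = 0 := by
  have : Subsingleton (Submodule R M) := by
    constructor
    intro a b
    ext x
    simp [Subsingleton.elim x 0]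
  have : Unique (Submodule R M) := uniqueOfSubsingleton ⊥
  rw [ldim, Order.krullDim_eq_zero_of_unique]
  rfl

variable (P M : Type) [CommRing P] [IsLocalRing P] [AddCommGroup M] [Module P M]
  [Module (ResidueField P) M] [IsScalarTower P (ResidueField P) M]

/-- promote a `P`-submodule to a `k`-submodule when the action factors. -/
def toKSub (N : Submodule P M) : Submodule (ResidueField P) M where
  carrier := N
  add_mem' := N.add_mem
  zero_mem' := N.zero_mem
  smul_mem' := by
    intro c x hx
    obtain ⟨a, rfl⟩ := IsLocalRing.residue_surjective (R := P) c
    have h : (residue P a) • x = a • x := algebraMap_smul (ResidueField P) a x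
    show (residue P a) • x ∈ N
    rw [h]
    exact N.smul_mem a hx

set_option linter.unusedSectionVars false in
theorem toKSub_strictMono : StrictMono (toKSub P M) := by
  intro a b hab
  rw [lt_iff_le_and_ne] at hab ⊢
  refine ⟨fun x hx => hab.1 hx, fun h => hab.2 ?_⟩
  ext x
  exact SetLike.ext_iff.mp h x

theorem ldim_ne_zero [FiniteDimensional (ResidueField P) M]
    (h : Nontrivial M) : ldim P M ≠ 0 := by
  classical
  set k := ResidueField P
  have hbt : (⊥ : Submodule P M) < ⊤ := by
    rw [lt_top_iff_ne_top]
    intro hc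
    obtain ⟨x, y, hxy⟩ := h
    apply hxy
    have hx : x ∈ (⊥ : Submodule P M) := hc ▸ Submodule.mem_top
    have hy : y ∈ (⊥ : Submodule P M) := hc ▸ Submodule.mem_top
    simp only [Submodule.mem_bot] at hx hy
    rw [hx, hy]
  have h1 : 1 ≤ Order.krullDim (Submodule P M) := by
    let p : LTSeries (Submodule P M) :=
      RelSeries.fromListIsChain [⊥, ⊤] (by simp) (by simp [hbt])
    have hle : (p.length : WithBot ℕ∞) ≤ Order.krullDim (Submodule P M) :=
      le_sSup ⟨p, rfl⟩
    have hp : p.length = 1 := rfl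
    rw [hp] at hle
    exact_mod_cast hle
  have h2 : Order.krullDim (Submodule P M)
      ≤ (Module.finrank k M : WithBot ℕ∞) := by
    rw [Order.krullDim]
    apply iSup_le
    intro p
    have hlen : p.length ≤ Module.finrank k M := by
      let q := p.map _ (StrictMono.comp (Submodule.finrank_strictMono (K := k) (V := M))
        (toKSub_strictMono P M))
      have h3 := LTSeries.head_add_length_le_nat q
      have h4 : q.last ≤ Module.finrank k M := Submodule.finrank_le _
      have h5 : q.length = p.length := rfl
      omega
    exact_mod_cast hlen
  intro hc
  rw [ldim] at hc
  have hne : Order.krullDim (Submodule P M) ≠ ⊥ := by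
    intro hb
    rw [hb] at h1
    simp [le_bot_iff] at h1
  obtain ⟨a, ha⟩ := WithBot.ne_bot_iff_exists.mp hne
  rw [← ha] at h1 h2 hc
  have ha2 : a ≤ (Module.finrank k M : ℕ∞) := WithBot.coe_le_coe.mp h2
  have hat : a ≠ ⊤ := ne_top_of_le_ne_top (by simp) ha2
  lift a to ℕ using hat with j hj
  have h1' : (1 : ℕ∞) ≤ (j : ℕ∞) := by exact_mod_cast h1
  rw [WithBot.unbotD_coe] at hc
  simp at hc
  subst hc
  simp at h1'

end Aux

section SeriesAux

lemma coeff_low (n : ℕ) : (coeff 0) ((1-X^2:PowerSeries ℤ)^n) = 1 ∧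
    (coeff 1) ((1-X^2:PowerSeries ℤ)^n) = 0 ∧
    (coeff 2) ((1-X^2:PowerSeries ℤ)^n) = -n := by
  induction n with
  | zero => simp
  | succ n ih =>
    obtain ⟨h0, h1, h2⟩ := ih
    rw [pow_succ]
    refine ⟨?_, ?_, ?_⟩ <;>
      simp [PowerSeries.coeff_mul, Finset.Nat.sum_antidiagonal_eq_sum_range_succ_mk,
        Finset.sum_range_succ, h0, h1, h2, coeff_X_pow]

lemma coeff_mul0 (A B : PowerSeries ℤ) :
    (coeff 0) (A * B) = coeff 0 A * coeff 0 B := by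
  simp [PowerSeries.coeff_mul, Finset.Nat.sum_antidiagonal_eq_sum_range_succ_mk,
    Finset.sum_range_succ]

lemma coeff_mul1 (A B : PowerSeries ℤ) :
    (coeff 1) (A * B) = coeff 0 A * coeff 1 B + coeff 1 A * coeff 0 B := by
  simp [PowerSeries.coeff_mul, Finset.Nat.sum_antidiagonal_eq_sum_range_succ_mk,
    Finset.sum_range_succ]

lemma coeff_mul2 (A B : PowerSeries ℤ) :
    (coeff 2) (A * B) = coeff 0 A * coeff 2 B + coeff 1 A * coeff 1 B
      + coeff 2 A * coeff 0 B := by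
  simp [PowerSeries.coeff_mul, Finset.Nat.sum_antidiagonal_eq_sum_range_succ_mk,
    Finset.sum_range_succ]

lemma coeff_one_sub_xsq_mul (Ds : PowerSeries ℤ) (i : ℕ) :
    (coeff i) ((1 - X^2) * Ds)
      = coeff i Ds - if 2 ≤ i then coeff (i-2) Ds else 0 := by
  have h : (1 - X^2 : PowerSeries ℤ) * Ds = Ds - X^2 * Ds := by ring
  rw [h, map_sub, PowerSeries.coeff_X_pow_mul' Ds 2 i]

lemma coeff_one_sub_x_mul (J : PowerSeries ℤ) (i : ℕ) (hi : 1 ≤ i) :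
    (coeff i) ((1 - X) * J) = coeff i J - coeff (i-1) J := by
  have h : (1 - X : PowerSeries ℤ) * J = J - X^1 * J := by ring
  rw [h, map_sub, PowerSeries.coeff_X_pow_mul' J 1 i, if_pos hi]

lemma key_ineq (n : ℕ) (Ds E : PowerSeries ℤ) (hE : ∀ i, 0 ≤ coeff i E)
    (heq : (1 - X^2)^n * Ds = E) :
    (∀ i, coeff i E ≤ coeff i Ds) ∧
    (∀ i, 2 ≤ i → coeff i E + (n:ℤ) * coeff (i-2) E ≤ coeff i Ds) := by
  induction n generalizing Ds with
  | zero =>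
    rw [pow_zero, one_mul] at heq
    subst heq
    exact ⟨fun i => le_refl _, fun i _ => by simp⟩
  | succ n ih =>
    set Ds' := (1 - X^2) * Ds with hDs'
    have heq' : (1 - X^2)^n * Ds' = E := by
      rw [hDs', ← heq]; ring
    obtain ⟨ihA, ihB⟩ := ih Ds' heq'
    have hrec : ∀ i, coeff i Ds
        = coeff i Ds' + (if 2 ≤ i then coeff (i-2) Ds else 0) := by
      intro i
      rw [hDs', coeff_one_sub_xsq_mul]
      ring
    have hA : ∀ i, coeff i E ≤ coeff i Ds := by
      intro i
      induction i using Nat.strong_induction_on with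
      | _ i ihi =>
        rw [hrec i]
        by_cases h2 : 2 ≤ i
        · rw [if_pos h2]
          have := ihi (i-2) (by omega)
          have := hE (i-2)
          have := ihA i
          linarith
        · rw [if_neg h2]
          simpa using ihA i
    refine ⟨hA, fun i h2 => ?_⟩
    rw [hrec i, if_pos h2]
    have h3 := ihB i h2
    have h4 := hA (i-2)
    push_cast
    linarith

end SeriesAux


/-- Suppose `g(t)·P^R_k(t) = (1+t)^{e-1}` and `g(t)·I^R(t) = t^d·f(t)` for
polynomials `f, g ∈ ℤ[t]`, and suppose `s ≥ 0` is an integer with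
`(1-t²)^{l+1}·P^R_k(t) = (1+t)^e·(1+t³)^s·(1 + Σ_{j≥3} c_j t^j)` where all `c_j ≥ 0`.
Let `Σ bᵢ tⁱ` be the Taylor expansion of `f(t)(1+t³)^s/(1-t²)²`.  Then `μ^d = b₀`,
`μ^{d+1} - μ^d = b₁`, `μ^{d+2} - μ^{d+1} = b₂ + (l-2)b₀`, and if `l ≥ 2` and `bᵢ ≥ 0`
for `i ≥ 1` then `μ^{d+i} - μ^{d+i-1} ≥ bᵢ + (l-2)b_{i-2} ≥ bᵢ` for all `i ≥ 2`. -/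
theorem bass_number_differences_from_rational_expression'
    (R : Type) [CommRing R] [IsNoetherianRing R] [IsLocalRing R]
    (cp : CohenPresentation R) (l : ℕ) (hl : cp.minGens = l + 1)
    (f g : Polynomial ℤ)
    (hg : (g : PowerSeries ℤ) * poincareK R = (1 + X) ^ (edim R - 1))
    (hf : (g : PowerSeries ℤ) * bassSeries R = X ^ (depthR R) * (f : PowerSeries ℤ))
    (s : ℕ) (c : ℕ → ℤ)
    (hc0 : c 0 = 1) (hc1 : c 1 = 0) (hc2 : c 2 = 0)
    (hcnn : ∀ j, 3 ≤ j → 0 ≤ c j)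
    (hserre : (1 - X ^ 2) ^ (l + 1) * poincareK R
      = (1 + X) ^ (edim R) * (1 + X ^ 3) ^ s * PowerSeries.mk c)
    (b : ℕ → ℤ)
    (hb : (1 - X ^ 2) ^ 2 * PowerSeries.mk b = (f : PowerSeries ℤ) * (1 + X ^ 3) ^ s) :
    (bassNum R (depthR R) : ℤ) = b 0 ∧
    (bassNum R (depthR R + 1) : ℤ) - (bassNum R (depthR R) : ℤ) = b 1 ∧
    (bassNum R (depthR R + 2) : ℤ) - (bassNum R (depthR R + 1) : ℤ)
      = b 2 + ((l : ℤ) - 2) * b 0 ∧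
    (2 ≤ l → (∀ i, 1 ≤ i → 0 ≤ b i) → ∀ i, 2 ≤ i →
      (bassNum R (depthR R + i) : ℤ) - (bassNum R (depthR R + i - 1) : ℤ)
          ≥ b i + ((l : ℤ) - 2) * b (i - 2) ∧
        b i + ((l : ℤ) - 2) * b (i - 2) ≥ b i) := by
  classical
  -- `e ≥ 1`
  have he : 1 ≤ edim R := by
    by_contra hcon
    have he0 : edim R = 0 := by omega
    haveI : IsNoetherianRing cp.P := cp.regular.1
    have hdim0 : ringKrullDim cp.P = ((0:ℕ) : WithBot ℕ∞) := by
      rw [cp.dimP, he0]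
    have hedP : edim cp.P = 0 := by
      have h := cp.regular.2
      rw [hdim0] at h
      exact_mod_cast h.symm
    have hsub : Subsingleton (CotangentSpace cp.P) := by
      by_contra hns
      have hnt : Nontrivial (CotangentSpace cp.P) := not_subsingleton_iff_nontrivial.mp hns
      exact ldim_ne_zero cp.P (CotangentSpace cp.P) hnt hedP
    have hfield : IsField cp.P := IsLocalRing.subsingleton_cotangentSpace_iff.mp hsub
    have hmax : maximalIdeal cp.P = ⊥ := IsLocalRing.isField_iff_maximalIdeal_eq.mp hfield
    have hIbot : cp.I = ⊥ := by
      have h := cp.hI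
      rw [hmax] at h
      have h2 : (⊥ : Ideal cp.P)^2 = ⊥ := by rw [pow_two, Ideal.mul_bot]
      rw [h2] at h
      exact le_bot_iff.mp h
    have hzero : minGensIdeal cp.P cp.I = 0 := by
      rw [hIbot]
      apply ldim_eq_zero
      haveI hs : Subsingleton ↥(⊥ : Ideal cp.P) := by infer_instance
      constructor
      intro a b
      obtain ⟨x, rfl⟩ := Submodule.Quotient.mk_surjective _ a
      obtain ⟨y, rfl⟩ := Submodule.Quotient.mk_surjective _ b
      rw [Subsingleton.elim x y]
    rw [CohenPresentation.minGens, hzero] at hl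
    omega
  -- vanishing of Bass numbers below the depth
  have hvanish : ∀ i, i < depthR R → bassNum R i = 0 := by
    intro i hi
    have hmem : i ∉ {j : ℕ | ¬ Subsingleton (extKR R j)} := Nat.notMem_of_lt_sInf hi
    have hss : Subsingleton (extKR R i) := not_not.mp hmem
    exact ldim_eq_zero R _ hss
  set d := depthR R with hd
  set J : PowerSeries ℤ := PowerSeries.mk fun i => (bassNum R (d + i) : ℤ) with hJdef
  have hJcoeff : ∀ i, coeff i J = (bassNum R (d + i) : ℤ) := by
    intro i; rw [hJdef, coeff_mk]
  have hJ : bassSeries R = X ^ d * J := by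
    ext n
    rw [PowerSeries.coeff_X_pow_mul' J d n]
    split_ifs with h
    · rw [bassSeries, coeff_mk, hJcoeff, show d + (n - d) = n by omega]
    · rw [bassSeries, coeff_mk, hvanish n (by omega)]
      norm_num
  have hX1 : (1 + X : PowerSeries ℤ) ≠ 0 := by
    intro h
    have := congrArg (constantCoeff) h
    simp at this
  have h1mX : (1 - X : PowerSeries ℤ) ≠ 0 := by
    intro h
    have := congrArg (constantCoeff) h
    simp at this
  -- Eq1
  have hEq1 : (1 - X^2)^(l+1) * (1+X)^(edim R - 1)
      = (g : PowerSeries ℤ) * ((1+X)^(edim R) * (1+X^3)^s * PowerSeries.mk c) := by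
    calc (1 - X^2)^(l+1) * (1+X)^(edim R - 1)
        = (1 - X^2)^(l+1) * ((g : PowerSeries ℤ) * poincareK R) := by rw [hg]
      _ = (g : PowerSeries ℤ) * ((1 - X^2)^(l+1) * poincareK R) := by ring
      _ = _ := by rw [hserre]
  have hEq2 : (1 - X^2)^(l+1)
      = (g : PowerSeries ℤ) * ((1+X) * (1+X^3)^s * PowerSeries.mk c) := by
    have hpow : (1+X : PowerSeries ℤ)^(edim R) = (1+X)^(edim R - 1) * (1+X) := by
      conv_lhs => rw [show edim R = (edim R - 1) + 1 by omega]
      rw [pow_succ]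
    apply mul_right_cancel₀ (pow_ne_zero (edim R - 1) hX1)
    rw [hEq1, hpow]
    ring
  have hfJ : (g : PowerSeries ℤ) * J = (f : PowerSeries ℤ) := by
    apply mul_left_cancel₀ (pow_ne_zero d (PowerSeries.X_ne_zero : (X : PowerSeries ℤ) ≠ 0))
    calc X^d * ((g : PowerSeries ℤ) * J) = (g : PowerSeries ℤ) * (X^d * J) := by ring
      _ = (g : PowerSeries ℤ) * bassSeries R := by rw [hJ]
      _ = X^d * (f : PowerSeries ℤ) := hf
  have hMAIN : (1 - X^2)^(l+1) * J
      = (1+X) * ((1 - X^2)^2 * (PowerSeries.mk c * PowerSeries.mk b)) := by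
    calc (1 - X^2)^(l+1) * J
        = ((g : PowerSeries ℤ) * ((1+X) * (1+X^3)^s * PowerSeries.mk c)) * J := by rw [← hEq2]
      _ = (1+X) * (PowerSeries.mk c * (((g : PowerSeries ℤ) * J) * (1+X^3)^s)) := by ring
      _ = (1+X) * (PowerSeries.mk c * ((f : PowerSeries ℤ) * (1+X^3)^s)) := by rw [hfJ]
      _ = (1+X) * (PowerSeries.mk c * ((1 - X^2)^2 * PowerSeries.mk b)) := by rw [← hb]
      _ = _ := by ring
  -- coefficients of `mk c * mk b`
  set E : PowerSeries ℤ := PowerSeries.mk c * PowerSeries.mk b with hEdef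
  have hE0 : coeff 0 E = b 0 := by
    rw [hEdef, coeff_mul0]; simp [hc0]
  have hE1 : coeff 1 E = b 1 := by
    rw [hEdef, coeff_mul1]; simp [hc0, hc1]
  have hE2 : coeff 2 E = b 2 := by
    rw [hEdef, coeff_mul2]; simp [hc0, hc1, hc2]
  -- low coefficients of both sides of hMAIN
  obtain ⟨hq0, hq1, hq2⟩ := coeff_low 2
  obtain ⟨hp0, hp1, hp2⟩ := coeff_low (l+1)
  have ha0 : coeff 0 (1 + X : PowerSeries ℤ) = 1 := by simp
  have ha1 : coeff 1 (1 + X : PowerSeries ℤ) = 1 := by simp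
  have ha2 : coeff 2 (1 + X : PowerSeries ℤ) = 0 := by
    simp [PowerSeries.coeff_X]
  have hc0' := congrArg (coeff 0) hMAIN
  have hc1' := congrArg (coeff 1) hMAIN
  have hc2' := congrArg (coeff 2) hMAIN
  simp only [coeff_mul0, coeff_mul1, coeff_mul2, hq0, hq1, hq2, hp0, hp1, hp2,
    ha0, ha1, ha2, hE0, hE1, hE2] at hc0' hc1' hc2'
  push_cast at hc0' hc1' hc2'
  have hJ0 : coeff 0 J = b 0 := by linarith
  have hJ1 : coeff 1 J = b 1 + b 0 := by linarith
  have hJ2 : coeff 2 J = b 2 + b 1 + ((l:ℤ) - 1) * b 0 := by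
    linear_combination hc2' + ((l:ℤ) + 1) * hJ0
  have hmu0 : (bassNum R d : ℤ) = b 0 := by
    have := hJcoeff 0
    rw [Nat.add_zero] at this
    rw [← this, hJ0]
  have hmu1 : (bassNum R (d+1) : ℤ) = b 1 + b 0 := by
    rw [← hJcoeff 1, hJ1]
  have hmu2 : (bassNum R (d+2) : ℤ) = b 2 + b 1 + ((l:ℤ) - 1) * b 0 := by
    rw [← hJcoeff 2, hJ2]
  have hb0 : (0:ℤ) ≤ b 0 := by
    rw [← hmu0]; positivity
  refine ⟨hmu0, by rw [hmu1, hmu0]; ring, by rw [hmu2, hmu1]; ring, ?_⟩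
  -- the inequality part
  intro hl2 hbpos i hi2
  have hbpos' : ∀ j, 0 ≤ b j := by
    intro j
    rcases Nat.eq_zero_or_pos j with h | h
    · rw [h]; exact hb0
    · exact hbpos j h
  have hterm : ∀ p : ℕ × ℕ, 0 ≤ coeff p.1 (PowerSeries.mk c) * coeff p.2 (PowerSeries.mk b) := by
    rintro ⟨p1, p2⟩
    rw [coeff_mk, coeff_mk]
    apply mul_nonneg _ (hbpos' p2)
    by_cases h3 : 3 ≤ p1
    · exact hcnn p1 h3
    · interval_cases p1 <;> simp [hc0, hc1, hc2]
  have hEpos : ∀ j, 0 ≤ coeff j E := by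
    intro j
    rw [hEdef, PowerSeries.coeff_mul]
    exact Finset.sum_nonneg fun p _ => hterm p
  have hEgeb : ∀ j, b j ≤ coeff j E := by
    intro j
    rw [hEdef, PowerSeries.coeff_mul]
    have hmem : ((0:ℕ), j) ∈ Finset.HasAntidiagonal.antidiagonal j := by simp
    have hsum := Finset.single_le_sum
      (f := fun p : ℕ × ℕ => coeff p.1 (PowerSeries.mk c) * coeff p.2 (PowerSeries.mk b))
      (fun p _ => hterm p) hmem
    simpa [coeff_mk, hc0] using hsum
  -- the key identity
  have hKEY : (1 - X^2)^(l-2) * ((1 - X) * J) = E := by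
    apply mul_left_cancel₀ (show ((1+X)^3 * (1-X)^2 : PowerSeries ℤ) ≠ 0 from
      mul_ne_zero (pow_ne_zero 3 hX1) (pow_ne_zero 2 h1mX))
    have h7 : ((1+X)^3 * (1-X)^2 : PowerSeries ℤ) * ((1 - X^2)^(l-2) * ((1 - X) * J))
        = (1 - X^2)^((l-2)+3) * J := by
      rw [pow_add]
      ring
    rw [h7, show l-2+3 = l+1 by omega, hMAIN, hEdef]
    ring
  obtain ⟨hA, hB⟩ := key_ineq (l-2) ((1 - X) * J) E hEpos hKEY
  have hcast : ((l-2 : ℕ) : ℤ) = (l:ℤ) - 2 := by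
    push_cast [hl2]
    ring
  have hDi : coeff i ((1 - X) * J) = (bassNum R (d+i) : ℤ) - (bassNum R (d+(i-1)) : ℤ) := by
    rw [coeff_one_sub_x_mul J i (by omega), hJcoeff, hJcoeff]
  have h8 := hB i hi2
  rw [hcast, hDi] at h8
  have h9 := hEgeb i
  have h10 := hEgeb (i-2)
  have h11 : (0:ℤ) ≤ (l:ℤ) - 2 := by
    have : (2:ℤ) ≤ (l:ℤ) := by exact_mod_cast hl2
    linarith
  have h12 : ((l:ℤ) - 2) * b (i-2) ≤ ((l:ℤ) - 2) * coeff (i-2) E :=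
    mul_le_mul_of_nonneg_left h10 h11
  have h13 : (0:ℤ) ≤ ((l:ℤ) - 2) * b (i-2) := mul_nonneg h11 (hbpos' (i-2))
  have hidx : depthR R + i - 1 = d + (i-1) := by omega
  constructor
  · rw [hidx]
    linarith
  · linarith

end
end

section
/- Let k be a field and let B be the 7-dimensional graded-commutative graded k-algebra with homogeneous basis 1 (degree 0), a_1, a_2 (degree 1), a_3, b_1, b_2 (degree 2), b_3 (degree 3), whose only nonzero products of basis elements (besides those with 1) are a_1a_2 = -a_2a_1 = a_3 and a_1b_2 = a_2b_1 = b_1a_2 = b_2a_1 = b_3 (this is B = C ⋉ ΣC_+, the trivial extension of the exterior algebra C = Λ_k(ka_1 ⊕ ka_2) on two degree-1 generators by the suspension of its augmentation ideal). Let B* = Hom_k(B,k) be the graded dual, a graded B-module via (xμ)(m) = (-1)^{ij}μ(xm) for x ∈ B_i and μ ∈ (B*)_j, and for an integer s let Σ^s denote the grading shift (Σ^s M)_j = M_{j-s} with the standard sign conventions on the B-action. Then there is an exact sequence of graded B-modules 0 → Σ^{-2}B_+ ⊕ Σ^{-1}k → Σ^{-2}B ⊕ Σ^{-3}B → B* →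 0, where B_+ = B_{≥1} and k carries the trivial B-module structure. -/
noncomputable section

/-- The degrees of the seven basis elements `1, a₁, a₂, a₃, b₁, b₂, b₃` of the algebra
`B = C ⋉ ΣC₊` (indices `0,…,6`). -/
def degOf : Fin 7 → ℕ := ![0, 1, 1, 2, 2, 2, 3]

/-- The degree-`i` homogeneous component of `B`: the span of the basis vectors of
degree `i`. -/
def homogPart (k : Type) [Field k] (B : Type) [Ring B] [Algebra k B]
    (e : Fin 7 → B) (i : ℕ) : Submodule k B :=
  Submodule.span k (e '' {j | degOf j = i})

/-- `B₊ = B_{≥1}`, the span of the basis vectors of positive degree. -/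
def posPart (k : Type) [Field k] (B : Type) [Ring B] [Algebra k B]
    (e : Fin 7 → B) : Submodule k B :=
  Submodule.span k (e '' {j | 1 ≤ (j : ℕ)})

set_option maxHeartbeats 4000000 in
/-- Let `B = C ⋉ ΣC₊` be the 7-dimensional graded-commutative
`k`-algebra with basis `1, a₁, a₂ (deg 1), a₃, b₁, b₂ (deg 2), b₃ (deg 3)` and nonzero
products `a₁a₂ = -a₂a₁ = a₃`, `a₁b₂ = a₂b₁ = b₁a₂ = b₂a₁ = b₃`.  Then there is an exact
sequence of graded `B`-modules
`0 → Σ⁻²B₊ ⊕ Σ⁻¹k → Σ⁻²B ⊕ Σ⁻³B → B* → 0`.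

Here the underlying `k`-linear maps `f` and `g` are required to be injective resp.
surjective with `range f = ker g` (exactness), to respect the gradings induced by the
indicated suspensions (where `(B*)_j = Hom_k(B_{-j},k)`), and to be `B`-linear with
respect to the `B`-actions on the suspensions `Σˢ` (sign `(-1)^{is}` for `x ∈ B_i`) and
on the graded dual `B*` (sign `(xμ)(m) = (-1)^{ij} μ(xm)`); the `B`-linearity conditions
are expressed elementwise on homogeneous elements, with the resulting explicit signs. -/
theorem exact_sequence_for_class_B
    (k : Type) [Field k] (B : Type) [Ring B] [Algebra k B]
    (e : Module.Basis (Fin 7) k B)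
    (he0 : e 0 = 1)
    (h12 : e 1 * e 2 = e 3)
    (h21 : e 2 * e 1 = - e 3)
    (h15 : e 1 * e 5 = e 6)
    (h51 : e 5 * e 1 = e 6)
    (h24 : e 2 * e 4 = e 6)
    (h42 : e 4 * e 2 = e 6)
    (hzero : ∀ i j : Fin 7, 1 ≤ (i : ℕ) → 1 ≤ (j : ℕ) →
      ((i : ℕ), (j : ℕ)) ∉ ({(1,2), (2,1), (1,5), (5,1), (2,4), (4,2)} : Set (ℕ × ℕ)) →
      e i * e j = 0) :
    ∃ (f : (↥(posPart k B ⇑e) × k) →ₗ[k] B × B)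
      (g : (B × B) →ₗ[k] Module.Dual k B),
      -- exactness of `0 → Σ⁻²B₊ ⊕ Σ⁻¹k → Σ⁻²B ⊕ Σ⁻³B → B* → 0`:
      Function.Injective f ∧
      Function.Surjective g ∧
      LinearMap.range f = LinearMap.ker g ∧
      -- `f` has degree `0` for the indicated suspensions:
      (∀ (a : ℕ) (p : ↥(posPart k B ⇑e)), (p : B) ∈ homogPart k B ⇑e a →
        (f (p, 0)).1 ∈ homogPart k B ⇑e a ∧ (f (p, 0)).2 ∈ homogPart k B ⇑e (a + 1)) ∧
      (∀ c : k, (f (0, c)).1 ∈ homogPart k B ⇑e 1 ∧ (f (0, c)).2 ∈ homogPart k B ⇑e 2) ∧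
      -- `f` is `B`-linear (with the suspension sign conventions):
      (∀ (i : ℕ) (x : B), x ∈ homogPart k B ⇑e i →
        ∀ (p q : ↥(posPart k B ⇑e)), (q : B) = x * (p : B) →
          f (q, 0) = (x * (f (p, 0)).1, ((-1 : k) ^ i) • (x * (f (p, 0)).2))) ∧
      (∀ (i : ℕ) (x : B), 1 ≤ i → x ∈ homogPart k B ⇑e i → ∀ c : k,
        (x * (f (0, c)).1, ((-1 : k) ^ i) • (x * (f (0, c)).2)) = ((0 : B), (0 : B))) ∧
      -- `g` has degree `0`: `g(Σ⁻²B_a) ⊆ (B*)_{a-2}` and `g(Σ⁻³B_b) ⊆ (B*)_{b-3}`: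
      (∀ (a : ℕ) (p : B), p ∈ homogPart k B ⇑e a →
        ∀ (m : ℕ) (y : B), y ∈ homogPart k B ⇑e m → (m : ℤ) ≠ 2 - (a : ℤ) →
          g (p, 0) y = 0) ∧
      (∀ (b : ℕ) (q : B), q ∈ homogPart k B ⇑e b →
        ∀ (m : ℕ) (y : B), y ∈ homogPart k B ⇑e m → (m : ℤ) ≠ 3 - (b : ℤ) →
          g (0, q) y = 0) ∧
      -- `g` is `B`-linear (with the suspension and graded-dual sign conventions):
      (∀ (i a : ℕ) (x p : B), x ∈ homogPart k B ⇑e i → p ∈ homogPart k B ⇑e a →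
        ∀ m : B, g (x * p, 0) m = ((-1 : k) ^ (i * a)) • g (p, 0) (x * m)) ∧
      (∀ (i b : ℕ) (x q : B), x ∈ homogPart k B ⇑e i → q ∈ homogPart k B ⇑e b →
        ∀ m : B, g (0, x * q) m = ((-1 : k) ^ (i * b)) • g (0, q) (x * m)) := by
  classical
  haveI : Module.Finite k B := Module.Finite.of_basis e
  -- multiplication table
  have tab : ∀ i j : Fin 7, e i * e j =
      if i = 0 then e j else if j = 0 then e i
      else if i = 1 ∧ j = 2 then e 3 else if i = 2 ∧ j = 1 then -e 3
      else if (i = 1 ∧ j = 5) ∨ (i = 5 ∧ j = 1) ∨ (i = 2 ∧ j = 4) ∨ (i = 4 ∧ j = 2)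
        then e 6 else 0 := by
    intro i j
    fin_cases i <;> fin_cases j <;>
      norm_num [Fin.ext_iff, he0] <;>
      first
        | exact h12 | exact h21 | exact h15 | exact h51 | exact h24 | exact h42
        | exact hzero _ _ (by norm_num) (by norm_num) (by norm_num [Prod.ext_iff])
  -- coordinate functionals
  have hco : ∀ i j : Fin 7, e.coord i (e j) = if j = i then 1 else 0 := by
    intro i j
    simp [Module.Basis.coord_apply, Module.Basis.repr_self, Finsupp.single_apply]
  -- the suspension-type map S
  obtain ⟨S, hS⟩ : ∃ S : B →ₗ[k] B, ∀ j : Fin 7,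
      S (e j) = if j = 1 then -e 4 else if j = 2 then e 5 else if j = 3 then -e 6 else 0 :=
    ⟨Module.Basis.constr e k _, fun j => Module.Basis.constr_basis e k _ j⟩
  -- the map f
  obtain ⟨f, hf⟩ : ∃ f : (↥(posPart k B ⇑e) × k) →ₗ[k] B × B,
      ∀ pc, f pc = ((pc.1 : B), S (pc.1 : B) + pc.2 • e 3) := by
    refine ⟨{ toFun := fun pc => ((pc.1 : B), S (pc.1 : B) + pc.2 • e 3)
              map_add' := ?_, map_smul' := ?_ }, fun pc => rfl⟩
    · intro a b
      simp only [Submodule.coe_add, map_add, add_smul, Prod.mk_add_mk, Prod.fst_add,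
        Prod.snd_add, Prod.mk.injEq]
      exact ⟨trivial, by abel⟩
    · rintro c ⟨p, t⟩
      simp only [Prod.smul_mk, SetLike.val_smul, map_smul, RingHom.id_apply, smul_add,
        smul_smul, smul_eq_mul]
  -- the map g
  obtain ⟨g, hg⟩ : ∃ g : (B × B) →ₗ[k] Module.Dual k B,
      ∀ (pq : B × B) (m : B), g pq m = e.coord 3 (pq.1 * m) + e.coord 6 (pq.2 * m) := by
    refine ⟨{ toFun := fun pq =>
                (e.coord 3) ∘ₗ LinearMap.mulLeft k pq.1 + (e.coord 6) ∘ₗ LinearMap.mulLeft k pq.2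
              map_add' := ?_, map_smul' := ?_ }, fun pq m => rfl⟩
    · rintro ⟨p, q⟩ ⟨p', q'⟩
      refine LinearMap.ext fun m => ?_
      simp only [LinearMap.add_apply, LinearMap.coe_comp, Function.comp_apply,
        LinearMap.mulLeft_apply, Prod.fst_add, Prod.snd_add, add_mul, map_add]
      ring
    · rintro c ⟨p, q⟩
      refine LinearMap.ext fun m => ?_
      simp only [LinearMap.add_apply, LinearMap.coe_comp, Function.comp_apply,
        LinearMap.mulLeft_apply, Prod.smul_mk, smul_mul_assoc, map_smul,
        RingHom.id_apply, LinearMap.smul_apply, smul_eq_mul]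
      ring
  -- membership helper
  have hmem : ∀ (j : Fin 7) (i : ℕ), degOf j = i → e j ∈ homogPart k B ⇑e i :=
    fun j i hj => Submodule.subset_span ⟨j, hj, rfl⟩
  -- homogeneity of S
  have hSdeg : ∀ (a : ℕ) (x : B), x ∈ homogPart k B ⇑e a → S x ∈ homogPart k B ⇑e (a + 1) := by
    intro a x hx
    induction hx using Submodule.span_induction with
    | mem x hx =>
      obtain ⟨j, hj, rfl⟩ := hx
      have hj' : degOf j = a := hj
      subst hj'
      rw [hS]
      fin_cases j <;> simp (config := { decide := true }) <;>
        first
          | exact Submodule.zero_mem _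
          | (refine hmem _ _ ?_; decide)
          | (refine Submodule.neg_mem _ (hmem _ _ ?_); decide)
    | zero => simp only [map_zero]; exact Submodule.zero_mem _
    | add x y _ _ ihx ihy => rw [map_add]; exact Submodule.add_mem _ ihx ihy
    | smul c x _ ih => rw [map_smul]; exact Submodule.smul_mem _ _ ih
  -- homogeneous-multiplication lemmas
  have hScomm : ∀ (i : ℕ) (x : B), x ∈ homogPart k B ⇑e i → ∀ p : B, p ∈ posPart k B ⇑e →
      S (x * p) = (-1 : k) ^ i • (x * S p) := by
    intro i x hx
    induction hx using Submodule.span_induction with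
    | mem x hx =>
      obtain ⟨u, hu, rfl⟩ := hx
      have hu' : degOf u = i := hu
      subst hu'
      intro p hp
      induction hp using Submodule.span_induction with
      | mem p hp =>
        obtain ⟨v, hv, rfl⟩ := hp
        have hv' : 1 ≤ (v : ℕ) := hv
        fin_cases u <;> fin_cases v <;>
          first
            | exact absurd hv' (by decide)
            | simp (config := { decide := true }) [tab, hS, he0, degOf, mul_neg, neg_neg,
                pow_succ]
      | zero => simp
      | add p q _ _ ihp ihq => simp only [mul_add, map_add, smul_add, ihp, ihq]
      | smul c p _ ihp =>
        rw [mul_smul_comm, map_smul, ihp, map_smul, mul_smul_comm, smul_comm]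
    | zero => intro p hp; simp
    | add x y _ _ ihx ihy =>
      intro p hp
      simp only [add_mul, map_add, smul_add, ihx p hp, ihy p hp]
    | smul c x _ ih =>
      intro p hp
      rw [smul_mul_assoc, map_smul, ih p hp, smul_mul_assoc, smul_comm]
  have hxe3 : ∀ (i : ℕ), 1 ≤ i → ∀ x : B, x ∈ homogPart k B ⇑e i → x * e 3 = 0 := by
    intro i hi x hx
    induction hx using Submodule.span_induction with
    | mem x hx =>
      obtain ⟨u, hu, rfl⟩ := hx
      have hu' : degOf u = i := hu
      subst hu'
      fin_cases u <;>
        first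
          | exact absurd hi (by decide)
          | simp (config := { decide := true }) [tab]
    | zero => simp
    | add x y _ _ ihx ihy => rw [add_mul, ihx, ihy, add_zero]
    | smul c x _ ih => rw [smul_mul_assoc, ih, smul_zero]
  have hcomm : ∀ (i a : ℕ) (x : B), x ∈ homogPart k B ⇑e i → ∀ p : B, p ∈ homogPart k B ⇑e a →
      x * p = (-1 : k) ^ (i * a) • (p * x) := by
    intro i a x hx
    induction hx using Submodule.span_induction with
    | mem x hx =>
      obtain ⟨u, hu, rfl⟩ := hx
      have hu' : degOf u = i := hu
      subst hu'
      intro p hp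
      induction hp using Submodule.span_induction with
      | mem p hp =>
        obtain ⟨v, hv, rfl⟩ := hp
        have hv' : degOf v = a := hv
        subst hv'
        fin_cases u <;> fin_cases v <;>
          simp (config := { decide := true }) [tab, degOf, mul_neg, neg_neg, pow_succ]
      | zero => simp
      | add p q _ _ ihp ihq => simp only [mul_add, add_mul, smul_add, ihp, ihq]
      | smul c p _ ihp =>
        rw [mul_smul_comm, ihp, smul_mul_assoc, smul_comm]
    | zero => intro p hp; simp
    | add x y _ _ ihx ihy =>
      intro p hp
      simp only [add_mul, mul_add, smul_add, ihx p hp, ihy p hp]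
    | smul c x _ ih =>
      intro p hp
      rw [smul_mul_assoc, ih p hp, mul_smul_comm, smul_comm]
  have hd3 : ∀ (a : ℕ) (p : B), p ∈ homogPart k B ⇑e a →
      ∀ (m : ℕ) (y : B), y ∈ homogPart k B ⇑e m → (m : ℤ) ≠ 2 - (a : ℤ) →
      e.coord 3 (p * y) = 0 := by
    intro a p hp
    induction hp using Submodule.span_induction with
    | mem p hp =>
      obtain ⟨u, hu, rfl⟩ := hp
      have hu' : degOf u = a := hu
      subst hu'
      intro m y hy
      induction hy using Submodule.span_induction with
      | mem y hy =>
        obtain ⟨v, hv, rfl⟩ := hy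
        have hv' : degOf v = m := hv
        subst hv'
        intro hne
        fin_cases u <;> fin_cases v <;>
          first
            | (exfalso; revert hne; norm_num [degOf]; done)
            | (simp (config := { decide := true }) [tab, hco]; done)
      | zero => intro _; simp
      | add y z _ _ ihy ihz => intro hne; rw [mul_add, map_add, ihy hne, ihz hne, add_zero]
      | smul c y _ ihy => intro hne; rw [mul_smul_comm, map_smul, ihy hne, smul_zero]
    | zero => intro m y _ _; simp
    | add p q _ _ ihp ihq =>
      intro m y hy hne
      rw [add_mul, map_add, ihp m y hy hne, ihq m y hy hne, add_zero]
    | smul c p _ ihp =>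
      intro m y hy hne
      rw [smul_mul_assoc, map_smul, ihp m y hy hne, smul_zero]
  have hd6 : ∀ (a : ℕ) (p : B), p ∈ homogPart k B ⇑e a →
      ∀ (m : ℕ) (y : B), y ∈ homogPart k B ⇑e m → (m : ℤ) ≠ 3 - (a : ℤ) →
      e.coord 6 (p * y) = 0 := by
    intro a p hp
    induction hp using Submodule.span_induction with
    | mem p hp =>
      obtain ⟨u, hu, rfl⟩ := hp
      have hu' : degOf u = a := hu
      subst hu'
      intro m y hy
      induction hy using Submodule.span_induction with
      | mem y hy =>
        obtain ⟨v, hv, rfl⟩ := hy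
        have hv' : degOf v = m := hv
        subst hv'
        intro hne
        fin_cases u <;> fin_cases v <;>
          first
            | (exfalso; revert hne; norm_num [degOf]; done)
            | (simp (config := { decide := true }) [tab, hco]; done)
      | zero => intro _; simp
      | add y z _ _ ihy ihz => intro hne; rw [mul_add, map_add, ihy hne, ihz hne, add_zero]
      | smul c y _ ihy => intro hne; rw [mul_smul_comm, map_smul, ihy hne, smul_zero]
    | zero => intro m y _ _; simp
    | add p q _ _ ihp ihq =>
      intro m y hy hne
      rw [add_mul, map_add, ihp m y hy hne, ihq m y hy hne, add_zero]
    | smul c p _ ihp =>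
      intro m y hy hne
      rw [smul_mul_assoc, map_smul, ihp m y hy hne, smul_zero]
  have hL1 : ∀ p : B, p ∈ posPart k B ⇑e → ∀ v : Fin 7,
      e.coord 3 (p * e v) + e.coord 6 (S p * e v) = 0 := by
    intro p hp
    induction hp using Submodule.span_induction with
    | mem p hp =>
      obtain ⟨u, hu, rfl⟩ := hp
      have hu' : 1 ≤ (u : ℕ) := hu
      intro v
      fin_cases u <;>
        first
          | exact absurd hu' (by decide)
          | (fin_cases v <;>
              simp (config := { decide := true }) [tab, hS, hco, neg_mul])
    | zero => intro v; simp
    | add p q _ _ ihp ihq =>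
      intro v
      simp only [add_mul, map_add]
      linear_combination ihp v + ihq v
    | smul c p _ ihp =>
      intro v
      simp only [smul_mul_assoc, map_smul, smul_eq_mul]
      linear_combination c * ihp v
  -- injectivity of f
  have hinj : Function.Injective f := by
    rintro ⟨p, c⟩ ⟨q, d⟩ h
    rw [hf, hf] at h
    rw [Prod.mk.injEq] at h
    obtain ⟨h1, h2⟩ := h
    have hpq : p = q := Subtype.ext h1
    subst hpq
    have h3 : c • e 3 = d • e 3 := by rwa [add_right_inj] at h2
    have h4 : (c - d) • e 3 = 0 := by rw [sub_smul, h3, sub_self]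
    rcases smul_eq_zero.mp h4 with h5 | h5
    · rw [Prod.mk.injEq]
      exact ⟨rfl, sub_eq_zero.mp h5⟩
    · exact absurd h5 (e.ne_zero 3)
  -- surjectivity of g
  have hsurj : Function.Surjective g := by
    intro μ
    refine ⟨(μ (e 3) • e 0 + μ (e 2) • e 1 + μ (e 0) • e 3,
             μ (e 6) • e 0 + μ (e 5) • e 1 + μ (e 4) • e 2 + μ (e 1) • e 5), ?_⟩
    refine Module.Basis.ext e fun v => ?_
    rw [hg]
    fin_cases v <;>
      simp (config := { decide := true }) [tab, hco, add_mul, smul_mul_assoc, map_add,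
        map_smul, smul_eq_mul]
  -- exactness
  have hle : LinearMap.range f ≤ LinearMap.ker g := by
    intro z hz
    obtain ⟨w, rfl⟩ := hz
    obtain ⟨p, c⟩ := w
    rw [LinearMap.mem_ker, hf]
    refine Module.Basis.ext e fun v => ?_
    rw [hg]
    have h1 := hL1 (p : B) p.2 v
    have he3v : e.coord 6 (e 3 * e v) = 0 := by
      fin_cases v <;> simp (config := { decide := true }) [tab, hco]
    simp only [add_mul, map_add, smul_mul_assoc, map_smul, he3v, smul_eq_mul, mul_zero,
      add_zero, LinearMap.zero_apply]
    linear_combination h1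
  have hB7 : Module.finrank k B = 7 := by
    rw [Module.finrank_eq_card_basis e]
    simp
  have hpos6 : Module.finrank k ↥(posPart k B ⇑e) = 6 := by
    have hset : ⇑e '' {j : Fin 7 | 1 ≤ (j : ℕ)} = Set.range (fun v : Fin 6 => e v.succ) := by
      ext x
      constructor
      · rintro ⟨j, hj, rfl⟩
        have hj' : 1 ≤ (j : ℕ) := hj
        have hjj : Fin.succ ⟨(j : ℕ) - 1, by omega⟩ = j := by
          apply Fin.ext
          simp only [Fin.val_succ]
          omega
        exact ⟨⟨(j : ℕ) - 1, by omega⟩, congrArg e hjj⟩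
      · rintro ⟨v, rfl⟩
        exact ⟨v.succ, by simp [Fin.val_succ], rfl⟩
    have hli : LinearIndependent k (fun v : Fin 6 => e v.succ) :=
      e.linearIndependent.comp Fin.succ (Fin.succ_injective _)
    have h2 : _root_.posPart k B ⇑e = Submodule.span k (Set.range fun v : Fin 6 => e v.succ) := by
      rw [show _root_.posPart k B ⇑e
          = Submodule.span k (⇑e '' {j : Fin 7 | 1 ≤ (j : ℕ)}) from rfl, hset]
    rw [h2, finrank_span_eq_card hli]
    simp
  have hdom7 : Module.finrank k (↥(posPart k B ⇑e) × k) = 7 := by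
    rw [Module.finrank_prod, hpos6, Module.finrank_self]
  have hrange7 : Module.finrank k ↥(LinearMap.range f) = 7 := by
    rw [← (LinearEquiv.ofInjective f hinj).finrank_eq, hdom7]
  have hker7 : Module.finrank k ↥(LinearMap.ker g) = 7 := by
    have hrn := LinearMap.finrank_range_add_finrank_ker g
    have hrg : LinearMap.range g = ⊤ := LinearMap.range_eq_top.mpr hsurj
    rw [hrg, finrank_top, Subspace.dual_finrank_eq, hB7, Module.finrank_prod, hB7] at hrn
    omega
  refine ⟨f, g, hinj, hsurj,
    Submodule.eq_of_le_of_finrank_eq hle (by rw [hrange7, hker7]),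
    ?_, ?_, ?_, ?_, ?_, ?_, ?_, ?_⟩
  · intro a p hp
    rw [hf]
    refine ⟨hp, ?_⟩
    simp only [zero_smul, add_zero]
    exact hSdeg a _ hp
  · intro c
    rw [hf]
    simp only [ZeroMemClass.coe_zero, map_zero, zero_add]
    exact ⟨Submodule.zero_mem _, Submodule.smul_mem _ _ (hmem 3 2 (by decide))⟩
  · intro i x hx p q hq
    rw [hf, hf]
    simp only [zero_smul, add_zero]
    rw [Prod.mk.injEq]
    exact ⟨hq, by rw [hq]; exact hScomm i x hx (p : B) p.2⟩
  · intro i x hi hx c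
    rw [hf]
    simp only [ZeroMemClass.coe_zero, map_zero, zero_add, mul_zero]
    rw [Prod.mk.injEq]
    refine ⟨rfl, ?_⟩
    rw [mul_smul_comm, hxe3 i hi x hx, smul_zero, smul_zero]
  · intro a p hp m y hy hne
    rw [hg]
    simp only [zero_mul, map_zero, add_zero]
    exact hd3 a p hp m y hy hne
  · intro b q hq m y hy hne
    rw [hg]
    simp only [zero_mul, map_zero, zero_add]
    exact hd6 b q hq m y hy hne
  · intro i a x p hx hp m
    rw [hg, hg]
    simp only [zero_mul, map_zero, add_zero]
    rw [hcomm i a x hx p hp, smul_mul_assoc, mul_assoc, map_smul]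
  · intro i b x q hx hq m
    rw [hg, hg]
    simp only [zero_mul, map_zero, zero_add]
    rw [hcomm i b x hx q hq, smul_mul_assoc, mul_assoc, map_smul]


end
end
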